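/- For every positive integer n coprime to p i for every index i (in particular for n = 1), the Koopman operator of R^[n] on L²(X, μ) has simple spectrum; that is, there exists f ∈ L²(X, μ) whose orbit {f ∘ (R^[n])^k : k ∈ ℤ} has dense linear span in L²(X, μ). -/

import Mathlib

open MeasureTheory Complex Finset ComplexConjugate
open scoped ENNReal

namespace KoopmanAux

variable {p : ℕ → ℕ} [∀ i, NeZero (p i)]


/-- The character of `∏ i, ZMod (p i)` attached to a finitely supported family `a`. -/
noncomputable def pichar (a : Π₀ i, ZMod (p i)) : AddChar (∀ i, ZMod (p i)) Circle where
  toFun x := ∏ i ∈ a.support, ZMod.toCircle (a i * x i)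
  map_zero_eq_one' := by
    simp
  map_add_eq_mul' x y := by
    simp only [Pi.add_apply, mul_add, AddChar.map_add_eq_mul, Finset.prod_mul_distrib]

lemma pichar_apply (a : Π₀ i, ZMod (p i)) (x : ∀ i, ZMod (p i)) :
    pichar a x = ∏ i ∈ a.support, ZMod.toCircle (a i * x i) := rfl

lemma pichar_apply_superset (a : Π₀ i, ZMod (p i)) (x : ∀ i, ZMod (p i))
    {s : Finset ℕ} (hs : a.support ⊆ s) :
    pichar a x = ∏ i ∈ s, ZMod.toCircle (a i * x i) := by
  rw [pichar_apply]
  refine Finset.prod_subset hs fun i _ hi => ?_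
  have : a i = 0 := by simpa using (DFinsupp.notMem_support_iff).1 hi
  simp [this]

lemma pichar_add (a b : Π₀ i, ZMod (p i)) (x : ∀ i, ZMod (p i)) :
    pichar (a + b) x = pichar a x * pichar b x := by
  rw [pichar_apply_superset (a + b) x (s := a.support ∪ b.support)
      (DFinsupp.support_add),
    pichar_apply_superset a x (s := a.support ∪ b.support) Finset.subset_union_left,
    pichar_apply_superset b x (s := a.support ∪ b.support) Finset.subset_union_right,
    ← Finset.prod_mul_distrib]
  refine Finset.prod_congr rfl fun i _ => ?_
  rw [DFinsupp.add_apply, add_mul, AddChar.map_add_eq_mul]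

lemma pichar_neg (a : Π₀ i, ZMod (p i)) (x : ∀ i, ZMod (p i)) :
    pichar (-a) x = (pichar a x)⁻¹ := by
  have h := pichar_add (-a) a x
  simp only [neg_add_cancel] at h
  have h0 : pichar (0 : Π₀ i, ZMod (p i)) x = 1 := by
    simp [pichar_apply]
  rw [h0] at h
  exact eq_inv_of_mul_eq_one_left h.symm

lemma pichar_zero (x : ∀ i, ZMod (p i)) : pichar (0 : Π₀ i, ZMod (p i)) x = 1 := by
  simp [pichar_apply]



lemma key_nt (hp : ∀ i, (p i).Prime) (hinj : Function.Injective p)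
    (s : Finset ℕ) (c : ∀ i, ZMod (p i))
    (h : ∏ i ∈ s, ZMod.toCircle (c i) = 1) :
    ∀ j ∈ s, c j = 0 := by
  -- pass to ℂ
  have h1 : ((∏ i ∈ s, ZMod.toCircle (c i) : Circle) : ℂ) = ∏ i ∈ s, (ZMod.toCircle (c i) : ℂ) :=
    map_prod Circle.coeHom _ s
  have hC : ∏ i ∈ s, (ZMod.toCircle (c i) : ℂ) = 1 := by
    rw [← h1, h, Circle.coe_one]
  have hexp : Complex.exp (∑ i ∈ s, (2 * Real.pi * I * ((c i).val : ℂ) / (p i : ℂ))) = 1 := by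
    rw [Complex.exp_sum]
    rw [← hC]
    refine Finset.prod_congr rfl fun i _ => ?_
    rw [ZMod.toCircle_apply]
  rw [Complex.exp_eq_one_iff] at hexp
  obtain ⟨m, hm⟩ := hexp
  have h2πI : (2 * Real.pi * I : ℂ) ≠ 0 := by
    simp [Real.pi_ne_zero, I_ne_zero]
  have hsumC : (∑ i ∈ s, (((c i).val : ℂ) / (p i : ℂ))) = (m : ℂ) := by
    apply mul_left_cancel₀ h2πI
    rw [Finset.mul_sum]
    rw [show ∑ i ∈ s, (2 * Real.pi * I : ℂ) * (((c i).val : ℂ) / (p i : ℂ))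
        = ∑ i ∈ s, (2 * Real.pi * I * ((c i).val : ℂ) / (p i : ℂ)) from
      Finset.sum_congr rfl fun i _ => by ring]
    rw [hm]; ring
  have hreal : (∑ i ∈ s, (((c i).val : ℝ) / (p i : ℝ))) = (m : ℝ) := by
    refine Complex.ofReal_injective ?_
    push_cast
    exact_mod_cast hsumC
  have hpne : ∀ i, ((p i : ℝ)) ≠ 0 := fun i => by
    exact_mod_cast (hp i).ne_zero
  have hterm : ∀ i ∈ s, ((((c i).val * ∏ j ∈ s.erase i, p j : ℕ)) : ℝ)
      = (((c i).val : ℝ) / (p i : ℝ)) * ∏ j ∈ s, (p j : ℝ) := by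
    intro i hi
    rw [Nat.cast_mul, Nat.cast_prod, ← Finset.mul_prod_erase _ _ hi]
    rw [div_mul_eq_mul_div, eq_div_iff (hpne i)]
    ring
  have hint : ((∑ i ∈ s, ((c i).val * ∏ j ∈ s.erase i, p j : ℕ) : ℕ) : ℝ)
      = ((m * ∏ i ∈ s, (p i : ℤ) : ℤ) : ℝ) := by
    rw [Nat.cast_sum, Finset.sum_congr rfl hterm, ← Finset.sum_mul, hreal]
    push_cast
    ring
  have hZ : (∑ i ∈ s, (((c i).val : ℤ) * ∏ k ∈ s.erase i, (p k : ℤ)))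
      = m * ∏ i ∈ s, (p i : ℤ) := by
    exact_mod_cast hint
  intro j hj
  -- go to an integer equation and reduce mod p j
  have hZ : (∑ i ∈ s, (((c i).val : ℤ) * ∏ k ∈ s.erase i, (p k : ℤ)))
      = m * ∏ i ∈ s, (p i : ℤ) := by
    have := hint
    push_cast at this
    exact_mod_cast this
  have hdvd_other : ∀ i ∈ s.erase j, ((p j : ℤ)) ∣ (((c i).val : ℤ) * ∏ k ∈ s.erase i, (p k : ℤ)) := by
    intro i hi
    have hij : j ≠ i := fun hji => (Finset.ne_of_mem_erase hi) (hji ▸ rfl)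
    have hjmem : j ∈ s.erase i := Finset.mem_erase.2 ⟨hij, hj⟩
    exact Dvd.dvd.mul_left (Finset.dvd_prod_of_mem (fun k => (p k : ℤ)) hjmem) _
  have hdvd_rhs : ((p j : ℤ)) ∣ m * ∏ i ∈ s, (p i : ℤ) :=
    Dvd.dvd.mul_left (Finset.dvd_prod_of_mem _ hj) _
  have hsplit : (∑ i ∈ s, (((c i).val : ℤ) * ∏ k ∈ s.erase i, (p k : ℤ)))
      = (((c j).val : ℤ) * ∏ k ∈ s.erase j, (p k : ℤ)) + ∑ i ∈ s.erase j, (((c i).val : ℤ) * ∏ k ∈ s.erase i, (p k : ℤ)) :=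
    (Finset.add_sum_erase _ _ hj).symm
  have hdvd_term : ((p j : ℤ)) ∣ (((c j).val : ℤ) * ∏ k ∈ s.erase j, (p k : ℤ)) := by
    have h1 : ((p j : ℤ)) ∣ ∑ i ∈ s.erase j, (((c i).val : ℤ) * ∏ k ∈ s.erase i, (p k : ℤ)) :=
      Finset.dvd_sum hdvd_other
    have : (((c j).val : ℤ) * ∏ k ∈ s.erase j, (p k : ℤ))
        = m * ∏ i ∈ s, (p i : ℤ) - ∑ i ∈ s.erase j, (((c i).val : ℤ) * ∏ k ∈ s.erase i, (p k : ℤ)) := by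
      rw [← hZ, hsplit]; ring
    rw [this]
    exact dvd_sub hdvd_rhs h1
  -- now in ℕ
  have hdvdN : p j ∣ (c j).val * ∏ k ∈ s.erase j, p k := by
    exact_mod_cast hdvd_term
  have hnotdvd : ¬ p j ∣ ∏ k ∈ s.erase j, p k := by
    intro hd
    obtain ⟨k, hk, hdk⟩ := (Nat.Prime.prime (hp j)).exists_mem_finset_dvd hd
    have : p j = p k := ((Nat.prime_dvd_prime_iff_eq (hp j) (hp k)).1 hdk)
    exact (Finset.ne_of_mem_erase hk) (hinj this).symm
  have hdvdval : p j ∣ (c j).val :=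
    ((Nat.Prime.dvd_mul (hp j)).1 hdvdN).resolve_right hnotdvd
  have hlt : (c j).val < p j := ZMod.val_lt _
  have : (c j).val = 0 := by
    rcases Nat.eq_zero_or_pos (c j).val with h0 | h0
    · exact h0
    · exact absurd (Nat.le_of_dvd h0 hdvdval) (not_le.2 hlt)
  exact (ZMod.val_eq_zero _).1 this


lemma continuous_pichar (a : Π₀ i, ZMod (p i)) :
    Continuous fun x : ∀ i, ZMod (p i) => ((pichar a x : Circle) : ℂ) := by
  refine Continuous.comp (g := ((↑) : Circle → ℂ)) (by exact continuous_subtype_val) ?_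
  have h : ⇑(pichar a (p := p)) = fun x => ∏ i ∈ a.support, ZMod.toCircle (a i * x i) := rfl
  rw [h]
  exact continuous_finset_prod (M := Circle) _ fun i _ =>
    show Continuous ((fun z : ZMod (p i) => ZMod.toCircle (a i * z)) ∘ fun x : ∀ j, ZMod (p j) => x i) from
      Continuous.comp continuous_of_discreteTopology (continuous_apply i)

noncomputable def cchar (a : Π₀ i, ZMod (p i)) : C((∀ i, ZMod (p i)), ℂ) :=
  ⟨fun x => (pichar a x : ℂ), continuous_pichar a⟩

lemma cchar_apply (a : Π₀ i, ZMod (p i)) (x : ∀ i, ZMod (p i)) :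
    cchar a x = (pichar a x : ℂ) := rfl

variable (μ : Measure (∀ i, ZMod (p i))) [IsProbabilityMeasure μ]

lemma meas_add_right (y : ∀ i, ZMod (p i)) :
    Measurable fun x : ∀ i, ZMod (p i) => x + y :=
  measurable_pi_lambda _ fun i =>
    show Measurable ((fun z : ZMod (p i) => z + y i) ∘ fun c : ∀ j, ZMod (p j) => c i) from
      Measurable.comp measurable_from_top (measurable_pi_apply i)

lemma integral_pichar_ne_zero (hμ : ∀ x : ∀ i, ZMod (p i), μ.map (fun y => y + x) = μ)
    {c : Π₀ i, ZMod (p i)} (hc : c ≠ 0) :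
    ∫ x, (pichar c x : ℂ) ∂μ = 0 := by
  obtain ⟨i0, hci0⟩ : ∃ i, c i ≠ 0 := by
    by_contra h
    push_neg at h
    exact hc (DFinsupp.ext h)
  set y : ∀ i, ZMod (p i) := Pi.single i0 1 with hy
  have hval : pichar c y = ZMod.toCircle (c i0) := by
    rw [pichar_apply]
    rw [Finset.prod_eq_single_of_mem i0 (DFinsupp.mem_support_iff.2 hci0)
      (fun i _ hne => by
        have : y i = 0 := Pi.single_eq_of_ne hne 1
        simp [this])]
    have : y i0 = 1 := Pi.single_eq_same i0 1
    simp [this]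
  have hne1 : ((pichar c y : Circle) : ℂ) ≠ 1 := by
    intro h
    have h2 : pichar c y = 1 := Circle.coe_injective (by simpa using h)
    rw [hval] at h2
    have : c i0 = (0 : ZMod (p i0)) := ZMod.injective_toCircle (by simpa using h2)
    exact hci0 this
  have hinv : ∫ x, (pichar c x : ℂ) ∂μ
      = (∫ x, (pichar c x : ℂ) ∂μ) * ((pichar c y : Circle) : ℂ) := by
    conv_lhs => rw [← hμ y]
    rw [integral_map (meas_add_right y).aemeasurable
      (Continuous.aestronglyMeasurable (continuous_pichar c))]
    have : ∀ x, ((pichar c (x + y) : Circle) : ℂ)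
        = ((pichar c x : Circle) : ℂ) * ((pichar c y : Circle) : ℂ) := fun x => by
      rw [AddChar.map_add_eq_mul]; push_cast; ring
    simp only [this]
    rw [integral_mul_const]
  have h0 : (∫ x, (pichar c x : ℂ) ∂μ) * (1 - ((pichar c y : Circle) : ℂ)) = 0 := by
    rw [mul_sub, mul_one, ← hinv, sub_self]
  rcases mul_eq_zero.1 h0 with h | h
  · exact h
  · exact absurd (by linear_combination -h : ((pichar c y : Circle) : ℂ) = 1) hne1

lemma integral_pichar (hμ : ∀ x : ∀ i, ZMod (p i), μ.map (fun y => y + x) = μ)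
    (c : Π₀ i, ZMod (p i)) :
    ∫ x, (pichar c x : ℂ) ∂μ = if c = 0 then 1 else 0 := by
  by_cases hc : c = 0
  · subst hc
    simp only [pichar_apply, DFinsupp.support_zero, Finset.prod_empty, Circle.coe_one]
    simp
  · rw [if_neg hc]
    exact integral_pichar_ne_zero μ hμ hc

noncomputable def echar (a : Π₀ i, ZMod (p i)) : Lp ℂ 2 μ :=
  ContinuousMap.toLp 2 μ ℂ (cchar a)

lemma orthonormal_echar (hμ : ∀ x : ∀ i, ZMod (p i), μ.map (fun y => y + x) = μ) :
    Orthonormal ℂ (echar μ (p := p)) := by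
  rw [orthonormal_iff_ite]
  intro a b
  have hinner : (inner ℂ (echar μ a) (echar μ b) : ℂ)
      = ∫ x, conj (cchar a x) * cchar b x ∂μ := by
    rw [MeasureTheory.L2.inner_def]
    refine integral_congr_ae ?_
    filter_upwards [ContinuousMap.coeFn_toLp (p := (2 : ENNReal)) μ (𝕜 := ℂ) (cchar a (p := p)),
      ContinuousMap.coeFn_toLp (p := (2 : ENNReal)) μ (𝕜 := ℂ) (cchar b (p := p))] with x hxa hxb
    rw [echar, echar, hxa, hxb]
    exact RCLike.inner_apply' _ _
  have hpt : ∀ x, conj (cchar a x) * cchar b x = ((pichar (b - a) x : Circle) : ℂ) := by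
    intro x
    rw [cchar_apply, cchar_apply, ← Circle.coe_inv_eq_conj]
    rw [sub_eq_add_neg, pichar_add, pichar_neg]
    push_cast
    ring
  rw [hinner]
  simp only [hpt]
  rw [integral_pichar μ hμ]
  by_cases hab : a = b
  · subst hab; simp
  · rw [if_neg (fun h => hab (sub_eq_zero.1 h).symm), if_neg hab]


lemma cchar_zero : cchar (0 : Π₀ i, ZMod (p i)) = 1 := by
  ext x
  rw [cchar_apply, pichar_zero]
  rfl

lemma cchar_mul (a b : Π₀ i, ZMod (p i)) : cchar a * cchar b = cchar (a + b) := by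
  ext x
  rw [ContinuousMap.mul_apply, cchar_apply, cchar_apply, cchar_apply, pichar_add]
  push_cast
  ring

lemma cchar_star (a : Π₀ i, ZMod (p i)) : star (cchar a) = cchar (-a) := by
  ext x
  rw [ContinuousMap.star_apply, cchar_apply, cchar_apply, pichar_neg]
  rw [RCLike.star_def, ← Circle.coe_inv_eq_conj]

/-- The submonoid of characters. -/
noncomputable def charSubmonoid : Submonoid C((∀ i, ZMod (p i)), ℂ) where
  carrier := Set.range (cchar (p := p))
  one_mem' := ⟨0, cchar_zero⟩
  mul_mem' := fun ⟨a, ha⟩ ⟨b, hb⟩ => ⟨a + b, by rw [← cchar_mul, ha, hb]⟩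

lemma star_mem_adjoin {x : C((∀ i, ZMod (p i)), ℂ)}
    (hx : x ∈ Algebra.adjoin ℂ (Set.range (cchar (p := p)))) :
    star x ∈ Algebra.adjoin ℂ (Set.range (cchar (p := p))) := by
    induction hx using Algebra.adjoin_induction with
    | mem f hf =>
      obtain ⟨a, rfl⟩ := hf
      rw [cchar_star]
      exact Algebra.subset_adjoin ⟨-a, rfl⟩
    | algebraMap r =>
      rw [← algebraMap_star_comm]
      exact Subalgebra.algebraMap_mem _ _
    | add f g _ _ hf hg =>
      rw [star_add]
      exact add_mem hf hg
    | mul f g _ _ hf hg =>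
      rw [star_mul]
      exact mul_mem hg hf

/-- The star subalgebra generated by the characters. -/
noncomputable def charStarSubalgebra : StarSubalgebra ℂ C((∀ i, ZMod (p i)), ℂ) where
  toSubalgebra := Algebra.adjoin ℂ (Set.range (cchar (p := p)))
  star_mem' := fun hx => star_mem_adjoin hx

lemma span_cchar_dense (hp : ∀ i, (p i).Prime) :
    Dense (↑(Submodule.span ℂ (Set.range (cchar (p := p)))) : Set C((∀ i, ZMod (p i)), ℂ)) := by
  have hsep : (charStarSubalgebra (p := p)).SeparatesPoints := by
    intro x y hxy
    obtain ⟨i, hi⟩ : ∃ i, x i ≠ y i := by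
      by_contra h
      push_neg at h
      exact hxy (funext h)
    haveI : Fact (1 < p i) := ⟨(hp i).one_lt⟩
    set a : Π₀ j, ZMod (p j) := DFinsupp.single i (1 : ZMod (p i)) with ha
    have hval : ∀ z : ∀ j, ZMod (p j), cchar a z = (ZMod.toCircle (z i) : ℂ) := by
      intro z
      rw [cchar_apply, pichar_apply_superset a z (s := {i}) (DFinsupp.support_single_subset)]
      rw [Finset.prod_singleton]
      rw [ha, DFinsupp.single_eq_same, one_mul]
    refine ⟨_, ⟨cchar a, Algebra.subset_adjoin ⟨a, rfl⟩, rfl⟩, ?_⟩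
    show (cchar a) x ≠ (cchar a) y
    rw [hval x, hval y]
    exact fun h => hi (ZMod.injective_toCircle (Circle.coe_injective h))
  have hcl := ContinuousMap.starSubalgebra_topologicalClosure_eq_top_of_separatesPoints
    (charStarSubalgebra (p := p)) hsep
  have hdense : Dense (↑(charStarSubalgebra (p := p)) : Set C((∀ i, ZMod (p i)), ℂ)) := by
    rw [dense_iff_closure_eq]
    have := congrArg (fun (S : StarSubalgebra ℂ C((∀ i, ZMod (p i)), ℂ)) =>
      (S : Set C((∀ i, ZMod (p i)), ℂ))) hcl
    simpa [StarSubalgebra.topologicalClosure_coe] using this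
  have hset : (↑(charStarSubalgebra (p := p)) : Set C((∀ i, ZMod (p i)), ℂ))
      = ↑(Submodule.span ℂ (Set.range (cchar (p := p)))) := by
    have h2 := Algebra.adjoin_eq_span ℂ (Set.range (cchar (p := p)))
    have h3 : Submonoid.closure (Set.range (cchar (p := p))) = charSubmonoid (p := p) :=
      Submonoid.closure_eq (charSubmonoid (p := p))
    rw [h3] at h2
    have : (↑(charStarSubalgebra (p := p)) : Set C((∀ i, ZMod (p i)), ℂ))
        = ↑(Subalgebra.toSubmodule (Algebra.adjoin ℂ (Set.range (cchar (p := p))))) := rfl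
    rw [this, h2]
    rfl
  rwa [hset] at hdense


lemma echar_coe (μ : Measure (∀ i, ZMod (p i))) [IsProbabilityMeasure μ]
    (a : Π₀ i, ZMod (p i)) : ⇑(echar μ a (p := p)) =ᵐ[μ] ⇑(cchar a) :=
  ContinuousMap.coeFn_toLp (p := (2 : ENNReal)) μ (𝕜 := ℂ) (cchar a)

lemma dense_span_echar (μ : Measure (∀ i, ZMod (p i))) [IsProbabilityMeasure μ]
    (hp : ∀ i, (p i).Prime) :
    Dense (↑(Submodule.span ℂ (Set.range (echar μ (p := p)))) : Set (Lp ℂ 2 μ)) := by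
  have hd := span_cchar_dense (p := p) hp
  have hdr : DenseRange ⇑(ContinuousMap.toLp (E := ℂ) 2 μ ℂ) :=
    ContinuousMap.toLp_denseRange ℂ μ ℂ (by norm_num)
  have himg := hdr.dense_image (ContinuousMap.toLp (E := ℂ) 2 μ ℂ).continuous hd
  have heq : ⇑(ContinuousMap.toLp (E := ℂ) 2 μ ℂ) ''
        ↑(Submodule.span ℂ (Set.range (cchar (p := p))))
      = ↑(Submodule.span ℂ (Set.range (echar μ (p := p)))) := by
    rw [← ContinuousLinearMap.coe_coe, ← Submodule.map_coe, Submodule.map_span]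
    congr 1
    rw [← Set.range_comp]
    rfl
  rwa [heq] at himg

end KoopmanAux

open KoopmanAux

set_option maxHeartbeats 2000000 in
/-- With `X = ∏ i, ZMod (p i)` (the `p i` pairwise distinct primes),
`μ` its Haar probability measure and `R x = x + g` the translation by the element `g`
with all coordinates `1`: for every positive integer `n` coprime to every `p i`
(in particular for `n = 1`), the Koopman operator of `R^[n]` on `L²(X, μ)` has simple
spectrum; i.e. there is `f ∈ L²(X, μ)` whose orbit `{f ∘ (R^[n])^k : k ∈ ℤ}`
(the `k`-th power of `R^[n]` is the translation by `(k * n) • g`) has dense linear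
span in `L²(X, μ)`. -/
theorem koopman_simple_spectrum_of_coprime_power
    (p : ℕ → ℕ) (hp : ∀ i, (p i).Prime) (hinj : Function.Injective p)
    (μ : Measure (∀ i, ZMod (p i))) [IsProbabilityMeasure μ]
    (hμ : ∀ x : ∀ i, ZMod (p i), μ.map (fun y => y + x) = μ)
    (g : ∀ i, ZMod (p i)) (hg : ∀ i, g i = 1)
    (n : ℕ) (hn : 0 < n) (hcop : ∀ i, Nat.Coprime n (p i)) :
    ∃ f : Lp ℂ 2 μ,
      Dense (↑(Submodule.span ℂ
          {h : Lp ℂ 2 μ | ∃ k : ℤ,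
            (h : (∀ i, ZMod (p i)) → ℂ) =ᵐ[μ] fun x => f (x + (k * n) • g)}) :
        Set (Lp ℂ 2 μ)) := by
  haveI : ∀ i, NeZero (p i) := fun i => ⟨(hp i).ne_zero⟩
  -- the Hilbert basis of characters
  have horth := orthonormal_echar μ hμ
  have hdense := dense_span_echar μ hp
  have htopcl : (Submodule.span ℂ (Set.range (echar μ (p := p)))).topologicalClosure = ⊤ := by
    refine SetLike.ext' ?_
    rw [Submodule.topologicalClosure_coe, hdense.closure_eq]
    rfl
  have htop : ⊤ ≤ (Submodule.span ℂ (Set.range (echar μ (p := p)))).topologicalClosure :=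
    le_of_eq htopcl.symm
  let b : HilbertBasis (Π₀ i, ZMod (p i)) ℂ (Lp ℂ 2 μ) := HilbertBasis.mk horth htop
  have hb : ⇑b = echar μ := HilbertBasis.coe_mk _ _
  letI : Encodable (Π₀ i, ZMod (p i)) := Encodable.ofCountable _
  -- the coefficients
  set c : (Π₀ i, ZMod (p i)) → ℂ := fun a => (((1/2 : ℝ) ^ Encodable.encode a : ℝ) : ℂ) with hcdef
  have hc0 : ∀ a, c a ≠ 0 := fun a => Complex.ofReal_ne_zero.2 (by positivity)
  have hcnorm : ∀ a, ‖c a‖ = (1/2 : ℝ) ^ Encodable.encode a := fun a => by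
    rw [hcdef, Complex.norm_real, Real.norm_eq_abs, _root_.abs_of_nonneg (by positivity)]
  have hcsum2 : Summable fun a => ‖c a‖ ^ (2 : ℝ) := by
    have h4 : Summable fun k : ℕ => ((1/4 : ℝ)) ^ k :=
      summable_geometric_of_lt_one (by norm_num) (by norm_num)
    refine ((h4.comp_injective Encodable.encode_injective)).congr fun a => ?_
    have h5 : ‖c a‖ ^ (2:ℝ) = ((1/2:ℝ) ^ Encodable.encode a) ^ (2:ℕ) := by
      rw [hcnorm, ← Real.rpow_natCast ((1/2:ℝ) ^ Encodable.encode a) 2]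
      norm_num
    rw [Function.comp_apply, h5, ← pow_mul, mul_comm, pow_mul]
    norm_num
  have hmemc : Memℓp c 2 := memℓp_gen (by simpa using hcsum2)
  set C : lp (fun _ : (Π₀ i, ZMod (p i)) => ℂ) 2 := ⟨c, hmemc⟩ with hCdef
  set f : Lp ℂ 2 μ := b.repr.symm C with hfdef
  refine ⟨f, ?_⟩
  -- the translations
  have hT : ∀ k : ℤ, MeasurePreserving (fun x : ∀ i, ZMod (p i) => x + (k * n) • g) μ μ :=
    fun k => ⟨meas_add_right _, hμ _⟩
  set U : ℤ → (Lp ℂ 2 μ →+ Lp ℂ 2 μ) := fun k => Lp.compMeasurePreserving _ (hT k) with hUdef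
  have hUcoe : ∀ (k : ℤ) (u : Lp ℂ 2 μ), ⇑(U k u) =ᵐ[μ] fun x => u (x + (k * n) • g) :=
    fun k u => Lp.coeFn_compMeasurePreserving u (hT k)
  have hUsmul : ∀ (k : ℤ) (z : ℂ) (u : Lp ℂ 2 μ), U k (z • u) = z • U k u := by
    intro k z u
    refine Lp.ext ?_
    have h5 : (fun x => (z • u : Lp ℂ 2 μ) (x + (k * n) • g))
        =ᵐ[μ] fun x => z • (u (x + (k * n) • g) : ℂ) :=
      (hT k).quasiMeasurePreserving.ae_eq_comp (Lp.coeFn_smul z u)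
    filter_upwards [hUcoe k (z • u), Lp.coeFn_smul z (U k u), h5, hUcoe k u]
      with x hx1 hx4 hx5 hx2
    rw [hx1, hx5, hx4, Pi.smul_apply, hx2]
  -- the eigenvalues
  set lam : (Π₀ i, ZMod (p i)) → Circle := fun a => pichar a (n • g) with hlamdef
  have hcoe_zpow : ∀ (z : Circle) (k : ℤ), ((z ^ k : Circle) : ℂ) = (z : ℂ) ^ k := by
    intro z k
    have h := map_zpow Circle.toUnits z k
    calc ((z ^ k : Circle) : ℂ) = ((Circle.toUnits (z ^ k) : ℂˣ) : ℂ) := rfl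
      _ = ((Circle.toUnits z ^ k : ℂˣ) : ℂ) := by rw [h]
      _ = ((Circle.toUnits z : ℂˣ) : ℂ) ^ k := Units.val_zpow_eq_zpow_val _ _
      _ = (z : ℂ) ^ k := rfl
  have hUe : ∀ (k : ℤ) (a : Π₀ i, ZMod (p i)),
      U k (echar μ a) = ((lam a ^ k : Circle) : ℂ) • echar μ a := by
    intro k a
    refine Lp.ext ?_
    have h3 : (fun x => (echar μ a (p := p)) (x + (k * n) • g))
        =ᵐ[μ] fun x => cchar a (x + (k * n) • g) :=
      (hT k).quasiMeasurePreserving.ae_eq_comp (echar_coe μ a)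
    have hpt : ∀ x, cchar a (x + (k * n) • g) = ((lam a ^ k : Circle) : ℂ) * cchar a x := by
      intro x
      rw [cchar_apply, cchar_apply, AddChar.map_add_eq_mul]
      have hsm : (k * (n : ℤ)) • g = k • ((n : ℕ) • g) := by
        rw [mul_smul, natCast_zsmul]
      have h6 : pichar a ((k * (n : ℤ)) • g) = lam a ^ k := by
        rw [hsm, AddChar.map_zsmul_eq_zpow, hlamdef]
      rw [h6]
      push_cast
      ring
    filter_upwards [hUcoe k (echar μ a), h3,
      Lp.coeFn_smul ((lam a ^ k : Circle) : ℂ) (echar μ a), echar_coe μ a]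
      with x hx1 hx3 hx4 hx2
    rw [hx1, hx3, hpt x, hx4, Pi.smul_apply, hx2, smul_eq_mul]
  -- expansion of f and of its orbit
  have hreprf : b.repr f = C := b.repr.apply_symm_apply C
  have hsumf : HasSum (fun a => c a • echar μ a) f := by
    have h := b.hasSum_repr f
    rw [hreprf, hb] at h
    exact h
  have hsumh : ∀ k : ℤ,
      HasSum (fun a => (c a * ((lam a : ℂ)) ^ k) • echar μ a) (U k f) := by
    intro k
    have hmap := hsumf.map (U k) (Lp.isometry_compMeasurePreserving (hT k)).continuous
    have he : ∀ a, U k (c a • echar μ a) = (c a * ((lam a : ℂ)) ^ k) • echar μ a := by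
      intro a
      rw [hUsmul, hUe, ← hcoe_zpow, smul_smul]
    simp only [Function.comp_def, he] at hmap
    exact hmap
  -- reduce to the span of the orbit
  have hmemS : ∀ k : ℤ, U k f ∈ {h : Lp ℂ 2 μ | ∃ k : ℤ,
      (h : (∀ i, ZMod (p i)) → ℂ) =ᵐ[μ] fun x => f (x + (k * n) • g)} :=
    fun k => ⟨k, hUcoe k f⟩
  suffices hdS : Dense (↑(Submodule.span ℂ (Set.range fun k : ℤ => U k f)) : Set (Lp ℂ 2 μ)) by
    exact hdS.mono (SetLike.coe_subset_coe.2
      (Submodule.span_mono (Set.range_subset_iff.2 hmemS)))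
  -- density via orthogonality
  have hinjlam : Function.Injective lam := by
    intro a a' hab
    have hng : ∀ i, ((n : ℕ) • g) i = (n : ZMod (p i)) := fun i => by
      rw [Pi.smul_apply, hg i, nsmul_eq_mul, mul_one]
    have hs : ∏ i ∈ a.support ∪ a'.support,
        ZMod.toCircle ((a i - a' i) * (n : ZMod (p i))) = 1 := by
      have ha1 : pichar a ((n : ℕ) • g)
          = ∏ i ∈ a.support ∪ a'.support, ZMod.toCircle (a i * (n : ZMod (p i))) := by
        rw [pichar_apply_superset a _ (Finset.subset_union_left)]
        exact Finset.prod_congr rfl fun i _ => by rw [hng i]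
      have ha2 : pichar a' ((n : ℕ) • g)
          = ∏ i ∈ a.support ∪ a'.support, ZMod.toCircle (a' i * (n : ZMod (p i))) := by
        rw [pichar_apply_superset a' _ (Finset.subset_union_right)]
        exact Finset.prod_congr rfl fun i _ => by rw [hng i]
      have hdiv : ∏ i ∈ a.support ∪ a'.support,
          ZMod.toCircle ((a i - a' i) * (n : ZMod (p i)))
          = (∏ i ∈ a.support ∪ a'.support, ZMod.toCircle (a i * (n : ZMod (p i))))
            / (∏ i ∈ a.support ∪ a'.support, ZMod.toCircle (a' i * (n : ZMod (p i)))) := by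
        rw [← Finset.prod_div_distrib]
        refine Finset.prod_congr rfl fun i _ => ?_
        rw [sub_mul, AddChar.map_sub_eq_div]
      rw [hdiv, ← ha1, ← ha2]
      have : pichar a ((n : ℕ) • g) = pichar a' ((n : ℕ) • g) := hab
      rw [this, div_self']
    have hkey := key_nt hp hinj _ _ hs
    ext j
    by_cases hj : j ∈ a.support ∪ a'.support
    · have h0 := hkey j hj
      haveI : Fact (p j).Prime := ⟨hp j⟩
      have hn0 : (n : ZMod (p j)) ≠ 0 := by
        rw [Ne, ZMod.natCast_eq_zero_iff]
        exact (Nat.Prime.coprime_iff_not_dvd (hp j)).1 (hcop j).symm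
      have := (mul_eq_zero.1 h0).resolve_right hn0
      exact sub_eq_zero.1 this
    · rw [Finset.mem_union, not_or] at hj
      rw [DFinsupp.notMem_support_iff.1 hj.1, DFinsupp.notMem_support_iff.1 hj.2]
  refine dense_iff_closure_eq.2 ?_
  have hcltop : (Submodule.span ℂ (Set.range fun k : ℤ => U k f)).topologicalClosure = ⊤ := by
    rw [Submodule.topologicalClosure_eq_top_iff, Submodule.eq_bot_iff]
    intro y hy
    -- inner products with the orbit vanish
    set w : (Π₀ i, ZMod (p i)) → ℂ := fun a => (inner ℂ y (echar μ a) : ℂ) with hwdef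
    set d : (Π₀ i, ZMod (p i)) → ℂ := fun a => c a * w a with hddef
    have hiz : ∀ k : ℤ, (inner ℂ y (U k f) : ℂ) = 0 := by
      intro k
      have h := (Submodule.mem_orthogonal _ y).1 hy (U k f)
        (Submodule.subset_span (Set.mem_range_self k))
      rw [← inner_conj_symm, h, map_zero]
    have hIP : ∀ k : ℤ, HasSum (fun a => (c a * ((lam a : ℂ)) ^ k) * w a) 0 := by
      intro k
      have h := (innerSL ℂ y).hasSum (hsumh k)
      simp only [innerSL_apply_apply, inner_smul_right] at h
      rwa [hiz k] at h
    -- summability of d in norm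
    have hw2 : Summable fun a => ‖w a‖ ^ (2 : ℝ) := by
      have hyl := lp.memℓp (b.repr y)
      have h := hyl.summable (by norm_num : 0 < (2 : ℝ≥0∞).toReal)
      refine h.congr fun a => ?_
      have hba2 : ∀ u : Lp ℂ 2 μ, u = echar μ a → ‖(inner ℂ y u : ℂ)‖ = ‖w a‖ := by
        intro u hu
        rw [hu, hwdef]
      have : ‖(b.repr y : ∀ _, ℂ) a‖ = ‖w a‖ := by
        rw [b.repr_apply_apply, ← inner_conj_symm, RCLike.norm_conj]
        refine hba2 _ ?_
        have h := congrFun hb a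
        convert h using 4
      rw [this]
      norm_num
    have hd : Summable fun a => ‖d a‖ := by
      have hc2 : Summable fun a => ‖c a‖ ^ 2 := by
        refine hcsum2.congr fun a => ?_
        rw [← Real.rpow_natCast ‖c a‖ 2]
        norm_num
      have hw2' : Summable fun a => ‖w a‖ ^ 2 := by
        refine hw2.congr fun a => ?_
        rw [← Real.rpow_natCast ‖w a‖ 2]
        norm_num
      refine Summable.of_nonneg_of_le (fun a => norm_nonneg _) (fun a => ?_)
        ((hc2.add hw2').div_const 2)
      rw [hddef, norm_mul]
      nlinarith [sq_nonneg (‖c a‖ - ‖w a‖), norm_nonneg (c a), norm_nonneg (w a)]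
    -- the averaging argument: each coefficient vanishes
    have hdzero : ∀ a₀, d a₀ = 0 := by
      intro a₀
      set r : (Π₀ i, ZMod (p i)) → ℂ := fun a => (lam a : ℂ) * conj ((lam a₀ : ℂ)) with hrdef
      have hrnorm : ∀ a, ‖r a‖ = 1 := by
        intro a
        rw [hrdef, norm_mul, RCLike.norm_conj]
        rw [Circle.norm_coe (lam a), Circle.norm_coe (lam a₀), mul_one]
      have hra0 : r a₀ = 1 := by
        show (lam a₀ : ℂ) * conj ((lam a₀ : ℂ)) = 1
        rw [Complex.mul_conj, Circle.normSq_coe]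
        norm_num
      have hrne : ∀ a, a ≠ a₀ → r a ≠ 1 := by
        intro a ha h1
        have h1 : (lam a : ℂ) * conj ((lam a₀ : ℂ)) = 1 := h1
        rw [← Circle.coe_inv_eq_conj, ← Circle.coe_mul] at h1
        have h2 : lam a * (lam a₀)⁻¹ = 1 := Circle.coe_injective (by simpa using h1)
        exact ha (hinjlam (mul_inv_eq_one.1 h2))
      have htsum0 : ∀ k : ℕ, ∑' a, d a * r a ^ k = 0 := by
        intro k
        have h2 : HasSum (fun a => (c a * (lam a : ℂ) ^ (k : ℕ)) * w a) 0 := by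
          simpa [zpow_natCast] using hIP (k : ℤ)
        have h3 := h2.mul_left ((conj ((lam a₀ : ℂ))) ^ k)
        have h4 : (fun a => (conj ((lam a₀ : ℂ))) ^ k * ((c a * (lam a : ℂ) ^ k) * w a))
            = fun a => d a * r a ^ k := by
          funext a
          rw [hddef, hrdef, mul_pow]
          ring
        rw [h4, mul_zero] at h3
        exact h3.tsum_eq
      have hsummable : ∀ k : ℕ, Summable fun a => d a * r a ^ k := by
        intro k
        refine Summable.of_norm (hd.congr fun a => ?_)
        conv_rhs => rw [norm_mul, norm_pow, hrnorm, one_pow, mul_one]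
      have havg : ∀ N : ℕ,
          ∑' a, ((N : ℂ))⁻¹ * (d a * ∑ k ∈ Finset.range N, r a ^ k) = 0 := by
        intro N
        have hswap : ∑' a, ∑ k ∈ Finset.range N, d a * r a ^ k
            = ∑ k ∈ Finset.range N, ∑' a, d a * r a ^ k :=
          Summable.tsum_finsetSum fun k _ => hsummable k
        calc ∑' a, ((N : ℂ))⁻¹ * (d a * ∑ k ∈ Finset.range N, r a ^ k)
            = ((N : ℂ))⁻¹ * ∑' a, (d a * ∑ k ∈ Finset.range N, r a ^ k) := tsum_mul_left
          _ = ((N : ℂ))⁻¹ * ∑' a, ∑ k ∈ Finset.range N, d a * r a ^ k := by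
              rw [tsum_congr fun a => Finset.mul_sum _ _ _]
          _ = ((N : ℂ))⁻¹ * ∑ k ∈ Finset.range N, ∑' a, d a * r a ^ k := by rw [hswap]
          _ = 0 := by simp [htsum0]
      have hlim : Filter.Tendsto
          (fun N : ℕ => ∑' a, ((N : ℂ))⁻¹ * (d a * ∑ k ∈ Finset.range N, r a ^ k))
          Filter.atTop (nhds (∑' a, if a = a₀ then d a₀ else 0)) := by
        refine tendsto_tsum_of_dominated_convergence hd ?_ ?_
        · intro a
          by_cases ha : a = a₀
          · subst ha
            have heq : ∀ᶠ N : ℕ in Filter.atTop,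
                ((N : ℂ))⁻¹ * (d a * ∑ k ∈ Finset.range N, r a ^ k) = d a := by
              refine Filter.eventually_atTop.2 ⟨1, fun N hN => ?_⟩
              have hNne : (N : ℂ) ≠ 0 := Nat.cast_ne_zero.2 (by omega)
              rw [hra0]
              simp only [one_pow, Finset.sum_const, Finset.card_range, nsmul_eq_mul, mul_one]
              field_simp
            rw [if_pos rfl]
            exact Filter.Tendsto.congr' (heq.mono fun N h => h.symm) tendsto_const_nhds
          · rw [if_neg ha]
            have hne := hrne a ha
            have hr1 : ‖r a - 1‖ ≠ 0 := by
              simpa [sub_eq_zero] using hne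
            have hbound : ∀ N : ℕ,
                ‖((N : ℂ))⁻¹ * (d a * ∑ k ∈ Finset.range N, r a ^ k)‖
                  ≤ (‖d a‖ * (2 / ‖r a - 1‖)) / N := by
              intro N
              have h1 : ‖((N : ℂ))⁻¹‖ = ((N : ℝ))⁻¹ := by
                rw [norm_inv, Complex.norm_natCast]
              have h2 : ‖r a ^ N - 1‖ ≤ 2 := by
                calc ‖r a ^ N - 1‖ ≤ ‖r a ^ N‖ + ‖(1 : ℂ)‖ := norm_sub_le _ _
                  _ = 2 := by rw [norm_pow, hrnorm, one_pow, norm_one]; norm_num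
              calc ‖((N : ℂ))⁻¹ * (d a * ∑ k ∈ Finset.range N, r a ^ k)‖
                  = ((N : ℝ))⁻¹ * (‖d a‖ * (‖r a ^ N - 1‖ / ‖r a - 1‖)) := by
                    rw [norm_mul, norm_mul, geom_sum_eq hne, norm_div, h1]
                _ ≤ ((N : ℝ))⁻¹ * (‖d a‖ * (2 / ‖r a - 1‖)) := by
                    gcongr
                _ = (‖d a‖ * (2 / ‖r a - 1‖)) / N := by
                    ring
            exact squeeze_zero_norm hbound
              (tendsto_const_div_atTop_nhds_zero_nat (‖d a‖ * (2 / ‖r a - 1‖)))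
        · refine Filter.eventually_atTop.2 ⟨1, fun N hN a => ?_⟩
          have hNpos : (0 : ℝ) < N := by exact_mod_cast Nat.pos_of_ne_zero (by omega)
          rw [norm_mul, norm_mul]
          have h1 : ‖((N : ℂ))⁻¹‖ = ((N : ℝ))⁻¹ := by
            rw [norm_inv, Complex.norm_natCast]
          have h2 : ‖∑ k ∈ Finset.range N, r a ^ k‖ ≤ N := by
            calc ‖∑ k ∈ Finset.range N, r a ^ k‖ ≤ ∑ k ∈ Finset.range N, ‖r a ^ k‖ :=
                norm_sum_le _ _
              _ = N := by simp [norm_pow, hrnorm]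
          rw [h1]
          calc ((N : ℝ))⁻¹ * (‖d a‖ * ‖∑ k ∈ Finset.range N, r a ^ k‖)
              ≤ ((N : ℝ))⁻¹ * (‖d a‖ * N) := by
                refine mul_le_mul_of_nonneg_left ?_ (by positivity)
                exact mul_le_mul_of_nonneg_left h2 (norm_nonneg _)
            _ = ‖d a‖ := by field_simp
      have hconst : Filter.Tendsto
          (fun N : ℕ => ∑' a, ((N : ℂ))⁻¹ * (d a * ∑ k ∈ Finset.range N, r a ^ k))
          Filter.atTop (nhds 0) := by
        simp only [havg]
        exact tendsto_const_nhds
      have h0 : (∑' a, if a = a₀ then d a₀ else 0) = d a₀ := tsum_ite_eq a₀ (fun _ => d a₀)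
      rw [← h0]
      exact tendsto_nhds_unique hlim hconst
    -- conclude y = 0
    have hwzero : ∀ a, w a = 0 := by
      intro a
      rcases mul_eq_zero.1 (hdzero a) with h | h
      · exact absurd h (hc0 a)
      · exact h
    have hyorth : y ∈ (Submodule.span ℂ (Set.range (echar μ (p := p))))ᗮ := by
      rw [Submodule.mem_orthogonal]
      intro u hu
      induction hu using Submodule.span_induction with
      | mem u hu =>
        obtain ⟨a, rfl⟩ := hu
        rw [← inner_conj_symm, show (inner ℂ y (echar μ a) : ℂ) = 0 from hwzero a, map_zero]
      | zero => exact inner_zero_left _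
      | add u v _ _ hu hv => rw [inner_add_left, hu, hv, add_zero]
      | smul z u _ hu => rw [inner_smul_left, hu, mul_zero]
    rw [Submodule.topologicalClosure_eq_top_iff.1 htopcl] at hyorth
    exact (Submodule.mem_bot ℂ).1 hyorth
  rw [← Submodule.topologicalClosure_coe, hcltop]
  exact Submodule.top_coe
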